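/- Let x, y ∈ L¹(0,∞) with x ≺ y. Then ∫₀^∞ f(x(t)) dt ≤ ∫₀^∞ f(y(t)) dt for every convex function f : ℝ → ℝ with f(0) = 0 such that f∘x and f∘y are integrable. -/

import Mathlib

open MeasureTheory Set

/-- Decreasing rearrangement of `|f|` with respect to Lebesgue measure on `(0,∞)`. -/
noncomputable def rearr (f : ℝ → ℝ) (t : ℝ) : ℝ :=
  sInf {s : ℝ | 0 ≤ s ∧ (volume.restrict (Set.Ioi (0:ℝ))) {x | s < |f x|} ≤ ENNReal.ofReal t}

/-- Positive part of a function. -/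
noncomputable def posPart' (f : ℝ → ℝ) : ℝ → ℝ := fun t => max (f t) 0

/-- Negative part of a function. -/
noncomputable def negPart' (f : ℝ → ℝ) : ℝ → ℝ := fun t => max (-f t) 0

/-- Hardy–Littlewood–Pólya submajorization on `(0,∞)`. -/
def SubMaj (f g : ℝ → ℝ) : Prop :=
  ∀ t : ℝ, 0 ≤ t →
    (∫ s in Set.Ioc (0:ℝ) t, rearr f s) ≤ ∫ s in Set.Ioc (0:ℝ) t, rearr g s

/-- Hardy–Littlewood–Pólya majorization on `(0,∞)`:
`f₊ ≺≺ g₊`, `f₋ ≺≺ g₋` and `∫ f = ∫ g`. -/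
def Maj (f g : ℝ → ℝ) : Prop :=
  SubMaj (posPart' f) (posPart' g) ∧ SubMaj (negPart' f) (negPart' g) ∧
    (∫ t in Set.Ioi (0:ℝ), f t) = ∫ t in Set.Ioi (0:ℝ), g t

open scoped ENNReal

namespace Stmt8Proof

noncomputable def dd (z : ℝ → ℝ) (u : ℝ) : ℝ≥0∞ :=
  (volume.restrict (Set.Ioi (0:ℝ))) {t | u < |z t|}

lemma rearr_eq (f : ℝ → ℝ) (t : ℝ) :
    rearr f t = sInf {s : ℝ | 0 ≤ s ∧ dd f s ≤ ENNReal.ofReal t} := rfl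

lemma dd_antitone (z : ℝ → ℝ) : Antitone (dd z) := fun _ _ huv =>
  measure_mono (fun _ ht => lt_of_le_of_lt huv ht)

lemma dd_measurable (z : ℝ → ℝ) : Measurable (dd z) := (dd_antitone z).measurable

lemma lintegral_eq_dd {z : ℝ → ℝ} (hz : Measurable z) (hz0 : ∀ t, 0 ≤ z t) :
    ∫⁻ t in Set.Ioi (0:ℝ), ENNReal.ofReal (z t) = ∫⁻ u in Set.Ioi (0:ℝ), dd z u := by
  rw [lintegral_eq_lintegral_meas_lt _ (Filter.Eventually.of_forall hz0) hz.aemeasurable]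
  refine setLIntegral_congr_fun measurableSet_Ioi ?_
  intro u _
  simp only [dd]
  congr 1
  ext t
  simp [abs_of_nonneg (hz0 t)]

lemma lintegral_z_lt_top {z : ℝ → ℝ} (hzi : IntegrableOn z (Set.Ioi 0)) (hz0 : ∀ t, 0 ≤ z t) :
    ∫⁻ t in Set.Ioi (0:ℝ), ENNReal.ofReal (z t) < ⊤ := by
  have h := hzi.2
  rw [hasFiniteIntegral_iff_norm] at h
  refine lt_of_le_of_lt (le_of_eq ?_) h
  exact lintegral_congr fun t => by rw [Real.norm_eq_abs, abs_of_nonneg (hz0 t)]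

lemma dd_lt_top {z : ℝ → ℝ} (hz : Measurable z) (hzi : IntegrableOn z (Set.Ioi 0))
    (hz0 : ∀ t, 0 ≤ z t) {u : ℝ} (hu : 0 < u) : dd z u < ⊤ := by
  have h1 : dd z u ≤ (∫⁻ t in Set.Ioi (0:ℝ), ENNReal.ofReal (z t)) / ENNReal.ofReal u := by
    refine le_trans (measure_mono ?_) (meas_ge_le_lintegral_div
      (hz.ennreal_ofReal.aemeasurable) (by simp [hu]) ENNReal.ofReal_ne_top)
    intro t ht
    simp only [Set.mem_setOf_eq] at ht ⊢
    exact ENNReal.ofReal_le_ofReal (le_of_lt (by rwa [abs_of_nonneg (hz0 t)] at ht))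
  exact lt_of_le_of_lt h1
    (ENNReal.div_lt_top (lintegral_z_lt_top hzi hz0).ne (by simp [hu]))

lemma dd_right_cont (z : ℝ → ℝ) (u : ℝ) :
    dd z u = ⨆ n : ℕ, dd z (u + 1 / (n + 1)) := by
  have hmono : Monotone (fun n : ℕ => {t : ℝ | u + 1 / (n + 1) < |z t|}) := by
    intro m n hmn t ht
    simp only [Set.mem_setOf_eq] at ht ⊢
    refine lt_of_le_of_lt (add_le_add_right ?_ u) ht
    apply one_div_le_one_div_of_le (by positivity)
    exact_mod_cast add_le_add_left (Nat.cast_le.2 hmn) 1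
  have hU : (⋃ n : ℕ, {t : ℝ | u + 1 / (n + 1) < |z t|}) = {t : ℝ | u < |z t|} := by
    ext t
    simp only [Set.mem_iUnion, Set.mem_setOf_eq]
    constructor
    · rintro ⟨n, hn⟩
      exact lt_of_le_of_lt (le_add_of_nonneg_right (by positivity)) hn
    · intro ht
      obtain ⟨n, hn⟩ := exists_nat_one_div_lt (sub_pos.2 ht)
      exact ⟨n, by linarith⟩
  unfold dd
  rw [← hU, hmono.measure_iUnion]

lemma nonempty_S {z : ℝ → ℝ} (hz : Measurable z) (hzi : IntegrableOn z (Set.Ioi 0))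
    (hz0 : ∀ t, 0 ≤ z t) {t : ℝ} (ht : 0 < t) :
    {s : ℝ | 0 ≤ s ∧ dd z s ≤ ENNReal.ofReal t}.Nonempty := by
  set L := ∫⁻ r in Set.Ioi (0:ℝ), ENNReal.ofReal (z r) with hL
  have hLt : L < ⊤ := lintegral_z_lt_top hzi hz0
  refine ⟨(L.toReal + 1) / t, ⟨by positivity, ?_⟩⟩
  have hs : (0:ℝ) < (L.toReal + 1) / t := by positivity
  have h1 : dd z ((L.toReal + 1) / t) ≤ L / ENNReal.ofReal ((L.toReal + 1) / t) := by
    refine le_trans (measure_mono ?_) (meas_ge_le_lintegral_div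
      (hz.ennreal_ofReal.aemeasurable) (by simp [hs]) ENNReal.ofReal_ne_top)
    intro r hr
    simp only [Set.mem_setOf_eq] at hr ⊢
    exact ENNReal.ofReal_le_ofReal (le_of_lt (by rwa [abs_of_nonneg (hz0 r)] at hr))
  refine h1.trans ?_
  rw [ENNReal.div_le_iff_le_mul (Or.inl (by simp [hs])) (Or.inl ENNReal.ofReal_ne_top)]
  rw [← ENNReal.ofReal_mul ht.le]
  rw [mul_div_cancel₀ _ ht.ne']
  calc L = ENNReal.ofReal L.toReal := by rw [ENNReal.ofReal_toReal hLt.ne]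
    _ ≤ ENNReal.ofReal (L.toReal + 1) := ENNReal.ofReal_le_ofReal (by linarith)

lemma lt_rearr_iff {z : ℝ → ℝ} (hz : Measurable z) (hzi : IntegrableOn z (Set.Ioi 0))
    (hz0 : ∀ t, 0 ≤ z t) {t u : ℝ} (ht : 0 < t) (hu : 0 ≤ u) :
    u < rearr z t ↔ ENNReal.ofReal t < dd z u := by
  rw [rearr_eq]
  constructor
  · intro h
    by_contra hc
    push_neg at hc
    exact absurd (csInf_le ⟨0, fun s hs => hs.1⟩ (Set.mem_setOf_eq ▸ ⟨hu, hc⟩)) (not_le.2 h)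
  · intro h
    have hrc := dd_right_cont z u
    rw [hrc] at h
    obtain ⟨n, hn⟩ := lt_iSup_iff.mp h
    have hlb : ∀ s ∈ {s : ℝ | 0 ≤ s ∧ dd z s ≤ ENNReal.ofReal t}, u + 1/(n+1) ≤ s := by
      intro s hs
      by_contra hc
      push_neg at hc
      exact absurd (le_trans (dd_antitone z hc.le) hs.2) (not_le.2 hn)
    have : u + 1/(n+1) ≤ sInf {s : ℝ | 0 ≤ s ∧ dd z s ≤ ENNReal.ofReal t} :=
      le_csInf (nonempty_S hz hzi hz0 ht) hlb
    have hpos : (0:ℝ) < 1/(n+1) := by positivity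
    linarith

lemma rearr_nonneg (z : ℝ → ℝ) (t : ℝ) : 0 ≤ rearr z t :=
  Real.sInf_nonneg (fun _ hs => hs.1)

lemma rearr_antitoneOn {z : ℝ → ℝ} (hz : Measurable z) (hzi : IntegrableOn z (Set.Ioi 0))
    (hz0 : ∀ t, 0 ≤ z t) : AntitoneOn (rearr z) (Set.Ioi 0) := by
  intro t1 ht1 t2 _ h12
  rw [rearr_eq, rearr_eq]
  refine csInf_le_csInf ⟨0, fun s hs => hs.1⟩ (nonempty_S hz hzi hz0 ht1) ?_
  intro s hs
  exact ⟨hs.1, hs.2.trans (ENNReal.ofReal_le_ofReal h12)⟩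

lemma meas_rearr {z : ℝ → ℝ} (hz : Measurable z) (hzi : IntegrableOn z (Set.Ioi 0))
    (hz0 : ∀ t, 0 ≤ z t) {u : ℝ} (hu : 0 ≤ u) :
    (volume.restrict (Set.Ioi (0:ℝ))) {t | u < rearr z t} = dd z u := by
  rw [Measure.restrict_apply' measurableSet_Ioi]
  have hset : {t | u < rearr z t} ∩ Set.Ioi 0
      = {t | 0 < t ∧ ENNReal.ofReal t < dd z u} := by
    ext t
    simp only [Set.mem_inter_iff, Set.mem_setOf_eq, Set.mem_Ioi]
    constructor
    · rintro ⟨h1, h2⟩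
      exact ⟨h2, (lt_rearr_iff hz hzi hz0 h2 hu).1 h1⟩
    · rintro ⟨h1, h2⟩
      exact ⟨(lt_rearr_iff hz hzi hz0 h1 hu).2 h2, h1⟩
  rw [hset]
  by_cases hd : dd z u = ⊤
  · have : {t | 0 < t ∧ ENNReal.ofReal t < dd z u} = Set.Ioi 0 := by
      ext t; simp [hd, Set.mem_Ioi, ENNReal.ofReal_lt_top]
    rw [this, hd, Real.volume_Ioi]
  · have : {t | 0 < t ∧ ENNReal.ofReal t < dd z u} = Set.Ioo 0 ((dd z u).toReal) := by
      ext t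
      simp only [Set.mem_setOf_eq, Set.mem_Ioo]
      constructor
      · rintro ⟨h1, h2⟩
        exact ⟨h1, (ENNReal.ofReal_lt_iff_lt_toReal h1.le hd).1 h2⟩
      · rintro ⟨h1, h2⟩
        exact ⟨h1, (ENNReal.ofReal_lt_iff_lt_toReal h1.le hd).2 h2⟩
    rw [this, Real.volume_Ioo, sub_zero, ENNReal.ofReal_toReal hd]

lemma layercake_rearr {z : ℝ → ℝ} (hz : Measurable z) (hzi : IntegrableOn z (Set.Ioi 0))
    (hz0 : ∀ t, 0 ≤ z t) {s : ℝ} (hs : 0 ≤ s) :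
    ∫⁻ t in Set.Ioi (0:ℝ), ENNReal.ofReal (max (rearr z t - s) 0)
      = ∫⁻ u in Set.Ioi s, dd z u := by
  have hmeas : AEMeasurable (fun t => max (rearr z t - s) 0)
      (volume.restrict (Set.Ioi (0:ℝ))) :=
    (((aemeasurable_restrict_of_antitoneOn measurableSet_Ioi
      (rearr_antitoneOn hz hzi hz0)).sub aemeasurable_const).max aemeasurable_const)
  have key := lintegral_eq_lintegral_meas_lt (volume.restrict (Set.Ioi (0:ℝ)))
    (f := fun t => max (rearr z t - s) 0)
    (Filter.Eventually.of_forall fun t => le_max_right _ _) hmeas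
  rw [key]
  have h1 : ∀ u ∈ Set.Ioi (0:ℝ),
      (volume.restrict (Set.Ioi (0:ℝ))) {t | u < max (rearr z t - s) 0}
        = dd z (u + s) := by
    intro u hu
    rw [Set.mem_Ioi] at hu
    have hset : {t : ℝ | u < max (rearr z t - s) 0} = {t | u + s < rearr z t} := by
      ext t
      simp only [Set.mem_setOf_eq, lt_max_iff]
      constructor
      · rintro (h | h)
        · linarith
        · linarith
      · intro h; left; linarith
    rw [hset]
    exact meas_rearr hz hzi hz0 (by linarith)
  rw [setLIntegral_congr_fun measurableSet_Ioi h1]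
  have h2 : ∀ u : ℝ, (Set.Ioi (0:ℝ)).indicator (fun u => dd z (u + s)) u
      = (Set.Ioi s).indicator (dd z) (u + s) := by
    intro u
    by_cases hu : u ∈ Set.Ioi (0:ℝ)
    · rw [Set.indicator_of_mem hu, Set.indicator_of_mem
        (by simpa using by linarith [Set.mem_Ioi.1 hu] : u + s ∈ Set.Ioi s)]
    · rw [Set.indicator_of_notMem hu, Set.indicator_of_notMem]
      simp only [Set.mem_Ioi] at hu ⊢
      intro hc; exact hu (by linarith)
  rw [← lintegral_indicator measurableSet_Ioi, ← lintegral_indicator measurableSet_Ioi]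
  calc ∫⁻ u, (Set.Ioi (0:ℝ)).indicator (fun u => dd z (u + s)) u
      = ∫⁻ u, (Set.Ioi s).indicator (dd z) (u + s) := lintegral_congr h2
    _ = ∫⁻ u, (Set.Ioi s).indicator (dd z) u :=
        lintegral_add_right_eq_self ((Set.Ioi s).indicator (dd z)) s

lemma rearr_aemeas {z : ℝ → ℝ} (hz : Measurable z) (hzi : IntegrableOn z (Set.Ioi 0))
    (hz0 : ∀ t, 0 ≤ z t) : AEMeasurable (rearr z) (volume.restrict (Set.Ioi (0:ℝ))) :=
  aemeasurable_restrict_of_antitoneOn measurableSet_Ioi (rearr_antitoneOn hz hzi hz0)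

lemma lintegral_rearr_eq {z : ℝ → ℝ} (hz : Measurable z) (hzi : IntegrableOn z (Set.Ioi 0))
    (hz0 : ∀ t, 0 ≤ z t) : ∫⁻ t in Set.Ioi (0:ℝ), ENNReal.ofReal (rearr z t)
    = ∫⁻ u in Set.Ioi (0:ℝ), dd z u := by
  have h := layercake_rearr hz hzi hz0 (le_refl (0:ℝ))
  simpa [max_eq_left (rearr_nonneg z _)] using h

lemma rearr_integrableOn {z : ℝ → ℝ} (hz : Measurable z) (hzi : IntegrableOn z (Set.Ioi 0))
    (hz0 : ∀ t, 0 ≤ z t) : IntegrableOn (rearr z) (Set.Ioi 0) := by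
  refine ⟨(rearr_aemeas hz hzi hz0).aestronglyMeasurable, ?_⟩
  rw [hasFiniteIntegral_iff_norm]
  have hnn : ∀ t, ENNReal.ofReal ‖rearr z t‖ = ENNReal.ofReal (rearr z t) := fun t => by
    rw [Real.norm_eq_abs, abs_of_nonneg (rearr_nonneg z t)]
  calc ∫⁻ t in Set.Ioi (0:ℝ), ENNReal.ofReal ‖rearr z t‖
      = ∫⁻ u in Set.Ioi (0:ℝ), dd z u := by
        rw [lintegral_congr hnn]; exact lintegral_rearr_eq hz hzi hz0
    _ = ∫⁻ t in Set.Ioi (0:ℝ), ENNReal.ofReal (z t) := (lintegral_eq_dd hz hz0).symm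
    _ < ⊤ := lintegral_z_lt_top hzi hz0

lemma sub_max_integrable {z : ℝ → ℝ} (hz : Measurable z) (hzi : IntegrableOn z (Set.Ioi 0))
    (hz0 : ∀ t, 0 ≤ z t) {s : ℝ} (hs : 0 ≤ s) :
    IntegrableOn (fun t => max (rearr z t - s) 0) (Set.Ioi 0) := by
  refine Integrable.mono (rearr_integrableOn hz hzi hz0)
    (((rearr_aemeas hz hzi hz0).sub aemeasurable_const).max
      aemeasurable_const).aestronglyMeasurable
    (Filter.Eventually.of_forall fun t => ?_)
  rw [Real.norm_eq_abs, Real.norm_eq_abs, abs_of_nonneg (le_max_right _ _),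
    abs_of_nonneg (rearr_nonneg z t)]
  rcases max_cases (rearr z t - s) 0 with ⟨h1, _⟩ | ⟨h1, _⟩ <;> rw [h1] <;>
    [linarith; exact rearr_nonneg z t]

end Stmt8Proof
namespace Stmt8Proof

lemma submaj_dd_pos {z w : ℝ → ℝ} (hz : Measurable z) (hzi : IntegrableOn z (Set.Ioi 0))
    (hz0 : ∀ t, 0 ≤ z t) (hw : Measurable w) (hwi : IntegrableOn w (Set.Ioi 0))
    (hw0 : ∀ t, 0 ≤ w t) (hsub : SubMaj z w) {s : ℝ} (hs : 0 < s) :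
    ∫⁻ u in Set.Ioi s, dd z u ≤ ∫⁻ u in Set.Ioi s, dd w u := by
  set T := (dd z s).toReal with hTdef
  have hT0 : 0 ≤ T := ENNReal.toReal_nonneg
  have hdtop : dd z s ≠ ⊤ := (dd_lt_top hz hzi hz0 hs).ne
  set Az := ∫ t in Set.Ioi (0:ℝ), max (rearr z t - s) 0 with hAz
  set Aw := ∫ t in Set.Ioi (0:ℝ), max (rearr w t - s) 0 with hAw
  have haz : ENNReal.ofReal Az = ∫⁻ u in Set.Ioi s, dd z u := by
    rw [hAz, ofReal_integral_eq_lintegral_ofReal (sub_max_integrable hz hzi hz0 hs.le)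
      (Filter.Eventually.of_forall fun t => le_max_right _ _)]
    exact layercake_rearr hz hzi hz0 hs.le
  have haw : ENNReal.ofReal Aw = ∫⁻ u in Set.Ioi s, dd w u := by
    rw [hAw, ofReal_integral_eq_lintegral_ofReal (sub_max_integrable hw hwi hw0 hs.le)
      (Filter.Eventually.of_forall fun t => le_max_right _ _)]
    exact layercake_rearr hw hwi hw0 hs.le
  rw [← haz, ← haw]
  apply ENNReal.ofReal_le_ofReal
  have hsplit : Az = ∫ t in Set.Ioc (0:ℝ) T, max (rearr z t - s) 0 := by
    rw [hAz, ← Set.Ioc_union_Ioi_eq_Ioi hT0,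
      setIntegral_union (Set.Ioc_disjoint_Ioi le_rfl) measurableSet_Ioi
        ((sub_max_integrable hz hzi hz0 hs.le).mono_set
          (by rw [← Set.Ioc_union_Ioi_eq_Ioi hT0]; exact Set.subset_union_left))
        ((sub_max_integrable hz hzi hz0 hs.le).mono_set
          (by rw [← Set.Ioc_union_Ioi_eq_Ioi hT0]; exact Set.subset_union_right))]
    have hzero : ∀ t ∈ Set.Ioi T, max (rearr z t - s) 0 = 0 := by
      intro t ht
      rw [Set.mem_Ioi] at ht
      have ht0 : 0 < t := lt_of_le_of_lt hT0 ht
      have hle : rearr z t ≤ s := by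
        by_contra hc
        push_neg at hc
        have h1 := (lt_rearr_iff hz hzi hz0 ht0 hs.le).1 hc
        have h2 : dd z s ≤ ENNReal.ofReal t := by
          calc dd z s = ENNReal.ofReal T := (ENNReal.ofReal_toReal hdtop).symm
            _ ≤ ENNReal.ofReal t := ENNReal.ofReal_le_ofReal ht.le
        exact absurd h1 (not_lt.2 h2)
      rw [max_eq_right (by linarith)]
    rw [setIntegral_eq_zero_of_forall_eq_zero hzero, add_zero]
  have hIoc : ∫ t in Set.Ioc (0:ℝ) T, max (rearr z t - s) 0
      = (∫ t in Set.Ioc (0:ℝ) T, rearr z t) - s * T := by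
    rw [integral_Ioc_eq_integral_Ioo]
    have hcong : ∀ t ∈ Set.Ioo (0:ℝ) T, max (rearr z t - s) 0 = rearr z t - s := by
      intro t ht
      obtain ⟨ht0, htT⟩ := ht
      have h1 : ENNReal.ofReal t < dd z s := by
        rw [← ENNReal.ofReal_toReal hdtop]
        exact ENNReal.ofReal_lt_ofReal_iff_of_nonneg ht0.le |>.2 htT
      have h2 : s < rearr z t := (lt_rearr_iff hz hzi hz0 ht0 hs.le).2 h1
      exact max_eq_left (by linarith)
    rw [setIntegral_congr_fun measurableSet_Ioo hcong]
    have hint1 : IntegrableOn (rearr z) (Set.Ioo (0:ℝ) T) :=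
      (rearr_integrableOn hz hzi hz0).mono_set (fun t ht => ht.1)
    rw [integral_sub hint1 (integrableOn_const
      (by rw [Real.volume_Ioo]; exact ENNReal.ofReal_ne_top))]
    rw [setIntegral_const, measureReal_def, Real.volume_Ioo, sub_zero, ENNReal.toReal_ofReal hT0,
      integral_Ioc_eq_integral_Ioo, smul_eq_mul, mul_comm]
  have hAw_ge : (∫ t in Set.Ioc (0:ℝ) T, rearr w t) - s * T ≤ Aw := by
    have h1 : (∫ t in Set.Ioc (0:ℝ) T, rearr w t) - s * T
        = ∫ t in Set.Ioc (0:ℝ) T, (rearr w t - s) := by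
      rw [integral_sub ((rearr_integrableOn hw hwi hw0).mono_set Set.Ioc_subset_Ioi_self)
        (integrableOn_const (by rw [Real.volume_Ioc]; exact ENNReal.ofReal_ne_top))]
      rw [setIntegral_const, measureReal_def, Real.volume_Ioc, sub_zero, ENNReal.toReal_ofReal hT0,
        smul_eq_mul, mul_comm]
    rw [h1]
    calc ∫ t in Set.Ioc (0:ℝ) T, (rearr w t - s)
        ≤ ∫ t in Set.Ioc (0:ℝ) T, max (rearr w t - s) 0 := by
          refine integral_mono ?_ ?_ (fun t => le_max_left _ _)
          · exact Integrable.sub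
              ((rearr_integrableOn hw hwi hw0).mono_set Set.Ioc_subset_Ioi_self)
              (integrableOn_const
                (by rw [Real.volume_Ioc]; exact ENNReal.ofReal_ne_top))
          · exact (sub_max_integrable hw hwi hw0 hs.le).mono_set Set.Ioc_subset_Ioi_self
      _ ≤ Aw := by
          rw [hAw]
          refine setIntegral_mono_set (sub_max_integrable hw hwi hw0 hs.le)
            (Filter.Eventually.of_forall fun t => le_max_right _ _)
            (HasSubset.Subset.eventuallyLE Set.Ioc_subset_Ioi_self)
  calc Az = (∫ t in Set.Ioc (0:ℝ) T, rearr z t) - s * T := by rw [hsplit, hIoc]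
    _ ≤ (∫ t in Set.Ioc (0:ℝ) T, rearr w t) - s * T := by
        have := hsub T hT0; linarith
    _ ≤ Aw := hAw_ge

lemma lintegral_Ioi_zero_eq_iSup (g : ℝ → ℝ≥0∞) (hg : Measurable g) :
    ∫⁻ u in Set.Ioi (0:ℝ), g u = ⨆ n : ℕ, ∫⁻ u in Set.Ioi (1 / (n + 1) : ℝ), g u := by
  have h1 : ∀ n : ℕ, ∫⁻ u in Set.Ioi (1 / (n + 1) : ℝ), g u
      = ∫⁻ u, (Set.Ioi (1 / (n + 1) : ℝ)).indicator g u := by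
    intro n; rw [lintegral_indicator measurableSet_Ioi]
  have h2 : ∫⁻ u in Set.Ioi (0:ℝ), g u = ∫⁻ u, (Set.Ioi (0:ℝ)).indicator g u := by
    rw [lintegral_indicator measurableSet_Ioi]
  simp_rw [h1, h2]
  rw [← lintegral_iSup]
  · congr 1
    ext u
    by_cases hu : 0 < u
    · rw [Set.indicator_of_mem (Set.mem_Ioi.2 hu)]
      obtain ⟨n, hn⟩ := exists_nat_one_div_lt hu
      apply le_antisymm
      · refine le_trans (le_of_eq ?_) (le_iSup _ n)
        rw [Set.indicator_of_mem (by exact_mod_cast hn : u ∈ Set.Ioi (1/(n+1):ℝ))]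
      · exact iSup_le fun m => Set.indicator_le_self _ _ u
    · rw [Set.indicator_of_notMem (by simpa using hu)]
      refine le_antisymm zero_le (iSup_le fun n => ?_)
      rw [Set.indicator_of_notMem]
      intro hc
      rw [Set.mem_Ioi] at hc
      exact hu (lt_trans (by positivity) hc)
  · exact fun n => hg.indicator measurableSet_Ioi
  · intro m n hmn u
    have hsub : Set.Ioi (1/(m+1):ℝ) ⊆ Set.Ioi (1/(n+1):ℝ) := by
      apply Set.Ioi_subset_Ioi
      apply one_div_le_one_div_of_le (by positivity)
      exact_mod_cast add_le_add_left (Nat.cast_le.2 hmn) 1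
    exact Set.indicator_le_indicator_of_subset hsub (fun _ => zero_le) u

lemma submaj_dd {z w : ℝ → ℝ} (hz : Measurable z) (hzi : IntegrableOn z (Set.Ioi 0))
    (hz0 : ∀ t, 0 ≤ z t) (hw : Measurable w) (hwi : IntegrableOn w (Set.Ioi 0))
    (hw0 : ∀ t, 0 ≤ w t) (hsub : SubMaj z w) :
    ∀ s : ℝ, 0 ≤ s → ∫⁻ u in Set.Ioi s, dd z u ≤ ∫⁻ u in Set.Ioi s, dd w u := by
  intro s hs
  rcases eq_or_lt_of_le hs with rfl | hpos
  · rw [lintegral_Ioi_zero_eq_iSup (dd z) (dd_measurable z),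
      lintegral_Ioi_zero_eq_iSup (dd w) (dd_measurable w)]
    exact iSup_mono fun n =>
      submaj_dd_pos hz hzi hz0 hw hwi hw0 hsub (by positivity)
  · exact submaj_dd_pos hz hzi hz0 hw hwi hw0 hsub hpos

end Stmt8Proof
namespace Stmt8Proof

lemma pairing_eq (z : ℝ → ℝ) {g : ℝ → ℝ} (hg : Monotone g) :
    ∫⁻ u in Set.Ioi (0:ℝ), ENNReal.ofReal (g u) * dd z u
      = ∫⁻ c in Set.Ioi (0:ℝ), ∫⁻ u in Set.Ioi (0:ℝ),
          ({u : ℝ | c < g u}).indicator (dd z) u := by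
  have hof : ∀ u : ℝ, ENNReal.ofReal (g u)
      = ∫⁻ c in Set.Ioi (0:ℝ), (Set.Iio (g u)).indicator (1 : ℝ → ℝ≥0∞) c := by
    intro u
    rw [lintegral_indicator_one measurableSet_Iio, Measure.restrict_apply' measurableSet_Ioi]
    have : Set.Iio (g u) ∩ Set.Ioi 0 = Set.Ioo 0 (g u) := by
      ext c; simp only [Set.mem_inter_iff, Set.mem_Iio, Set.mem_Ioi, Set.mem_Ioo]; tauto
    rw [this, Real.volume_Ioo, sub_zero]
  have hstep : ∀ u : ℝ, ENNReal.ofReal (g u) * dd z u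
      = ∫⁻ c in Set.Ioi (0:ℝ), (Set.Iio (g u)).indicator (1 : ℝ → ℝ≥0∞) c * dd z u := by
    intro u
    rw [hof u]
    exact (lintegral_mul_const _ (measurable_one.indicator measurableSet_Iio)).symm
  calc ∫⁻ u in Set.Ioi (0:ℝ), ENNReal.ofReal (g u) * dd z u
      = ∫⁻ u in Set.Ioi (0:ℝ), ∫⁻ c in Set.Ioi (0:ℝ),
          (Set.Iio (g u)).indicator (1 : ℝ → ℝ≥0∞) c * dd z u := lintegral_congr hstep
    _ = ∫⁻ c in Set.Ioi (0:ℝ), ∫⁻ u in Set.Ioi (0:ℝ),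
          (Set.Iio (g u)).indicator (1 : ℝ → ℝ≥0∞) c * dd z u := by
        apply lintegral_lintegral_swap
        have hS : MeasurableSet {p : ℝ × ℝ | p.2 < g p.1} :=
          measurableSet_lt measurable_snd (hg.measurable.comp measurable_fst)
        have heq : (Function.uncurry fun u c =>
            (Set.Iio (g u)).indicator (1 : ℝ → ℝ≥0∞) c * dd z u)
            = ({p : ℝ × ℝ | p.2 < g p.1}).indicator (fun p => dd z p.1) := by
          ext p
          by_cases hp : p.2 < g p.1 <;>
            simp [Function.uncurry, Set.indicator_apply, Set.mem_Iio, Set.mem_setOf_eq, hp]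
        rw [heq]
        exact (((dd_measurable z).comp measurable_fst).indicator hS).aemeasurable
    _ = ∫⁻ c in Set.Ioi (0:ℝ), ∫⁻ u in Set.Ioi (0:ℝ),
          ({u : ℝ | c < g u}).indicator (dd z) u := by
        refine lintegral_congr fun c => lintegral_congr fun u => ?_
        by_cases hp : c < g u <;>
          simp [Set.indicator_apply, Set.mem_Iio, Set.mem_setOf_eq, hp]

lemma pairing_mono {z w : ℝ → ℝ} {g : ℝ → ℝ} (hg : Monotone g)
    (hkey : ∀ s : ℝ, 0 ≤ s → ∫⁻ u in Set.Ioi s, dd z u ≤ ∫⁻ u in Set.Ioi s, dd w u) :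
    ∫⁻ u in Set.Ioi (0:ℝ), ENNReal.ofReal (g u) * dd z u
      ≤ ∫⁻ u in Set.Ioi (0:ℝ), ENNReal.ofReal (g u) * dd w u := by
  rw [pairing_eq z hg, pairing_eq w hg]
  refine lintegral_mono fun c => ?_
  have hSm : MeasurableSet {u : ℝ | c < g u} := measurableSet_lt measurable_const hg.measurable
  have hzz : ∀ v : ℝ → ℝ, ∫⁻ u in Set.Ioi (0:ℝ), ({u : ℝ | c < g u}).indicator (dd v) u
      = ∫⁻ u in {u : ℝ | c < g u} ∩ Set.Ioi 0, dd v u := by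
    intro v
    rw [lintegral_indicator hSm, Measure.restrict_restrict hSm]
  rw [hzz z, hzz w]
  set S := {u : ℝ | c < g u} ∩ Set.Ioi 0 with hS
  rcases Set.eq_empty_or_nonempty S with hemp | hne
  · rw [hemp]; simp
  · have hbdd : BddBelow S := ⟨0, fun u hu => (Set.mem_Ioi.1 hu.2).le⟩
    set m := sInf S with hm
    have hm0 : 0 ≤ m := le_csInf hne fun u hu => (Set.mem_Ioi.1 hu.2).le
    have hae : S =ᵐ[volume] Set.Ioi m := by
      rw [Filter.eventuallyEq_set]
      have h1 : S \ Set.Ioi m ⊆ {m} := by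
        intro u hu
        have h2 : m ≤ u := csInf_le hbdd hu.1
        have h3 : ¬ m < u := hu.2
        simp only [Set.mem_singleton_iff]
        linarith [not_lt.1 h3]
      have h2 : Set.Ioi m \ S ⊆ ∅ := by
        intro u hu
        exfalso
        obtain ⟨u', hu'S, hu'⟩ := exists_lt_of_csInf_lt hne hu.1
        exact hu.2 ⟨lt_of_lt_of_le hu'S.1 (hg hu'.le), lt_trans hu'S.2 hu'⟩
      have hnull : volume (S \ Set.Ioi m ∪ Set.Ioi m \ S) = 0 := by
        refine measure_mono_null (Set.union_subset_union h1 h2) ?_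
        rw [Set.union_empty]
        exact Real.volume_singleton
      exact measure_mono_null (fun u (hu : u ∈ {x | ¬(x ∈ S ↔ x ∈ Set.Ioi m)}) => by
        by_cases h : u ∈ S
        · exact Set.mem_union_left _ ⟨h, fun hm' => hu (iff_of_true h hm')⟩
        · refine Set.mem_union_right _ ⟨?_, h⟩
          by_contra hmn
          exact hu (iff_of_false h hmn)) hnull
    rw [setLIntegral_congr hae, setLIntegral_congr hae]
    exact hkey m hm0

noncomputable def rd (f : ℝ → ℝ) : ℝ → ℝ := fun a => sInf (slope f a '' Set.Ioi a)

section Convex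
variable {f : ℝ → ℝ} (hconv : ConvexOn ℝ Set.univ f)

include hconv in
lemma slope_mono_Ioi (a : ℝ) : MonotoneOn (slope f a) (Set.Ioi a) :=
  (hconv.slope_mono (Set.mem_univ a)).mono
    (fun b hb => ⟨Set.mem_univ b, ne_of_gt (Set.mem_Ioi.1 hb)⟩)

include hconv in
lemma slope_bddBelow (a : ℝ) : BddBelow (slope f a '' Set.Ioi a) := by
  refine ⟨slope f a (a - 1), ?_⟩
  rintro v ⟨b, hb, rfl⟩
  exact (hconv.slope_mono (Set.mem_univ a))
    ⟨Set.mem_univ _, by intro h; rw [Set.mem_singleton_iff] at h; linarith⟩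
    ⟨Set.mem_univ _, ne_of_gt (Set.mem_Ioi.1 hb)⟩
    (by linarith [Set.mem_Ioi.1 hb])

include hconv in
lemma hasRightDeriv (a : ℝ) : HasDerivWithinAt f (rd f a) (Set.Ioi a) a := by
  rw [hasDerivWithinAt_iff_tendsto_slope]
  have h : Set.Ioi a \ {a} = Set.Ioi a := Set.diff_singleton_eq_self (by simp)
  rw [h]
  exact MonotoneOn.tendsto_nhdsGT (slope_mono_Ioi hconv a) (slope_bddBelow hconv a)

include hconv in
lemma rd_le_slope {a b : ℝ} (hab : a < b) : rd f a ≤ slope f a b :=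
  csInf_le (slope_bddBelow hconv a) ⟨b, hab, rfl⟩

include hconv in
lemma slope_le_rd {a b : ℝ} (hab : a < b) : slope f a b ≤ rd f b := by
  refine le_csInf ⟨slope f b (b + 1), ⟨b + 1, by simp, rfl⟩⟩ ?_
  rintro v ⟨c, hc, rfl⟩
  rw [slope_comm]
  exact (hconv.slope_mono (Set.mem_univ b))
    ⟨Set.mem_univ _, ne_of_lt hab⟩ ⟨Set.mem_univ _, ne_of_gt (Set.mem_Ioi.1 hc)⟩
    (by linarith [Set.mem_Ioi.1 hc])

include hconv in
lemma rd_mono : Monotone (rd f) := by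
  intro a b hab
  rcases eq_or_lt_of_le hab with rfl | h
  · exact le_refl _
  · exact (rd_le_slope hconv h).trans (slope_le_rd hconv h)

include hconv in
lemma ftc_rd {a b : ℝ} (hab : a ≤ b) : ∫ u in a..b, rd f u = f b - f a := by
  refine intervalIntegral.integral_eq_sub_of_hasDeriv_right_of_le hab
    ((hconv.continuousOn isOpen_univ).mono (Set.subset_univ _))
    (fun x _ => hasRightDeriv hconv x) ?_
  exact (rd_mono hconv).intervalIntegrable

include hconv in
lemma rd_integrableOn_Ioc {a b : ℝ} : IntegrableOn (rd f) (Set.Ioc a b) := by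
  rcases le_or_gt a b with h | h
  · rw [← Set.uIoc_of_le h]
    exact intervalIntegrable_iff.1 (rd_mono hconv).intervalIntegrable
  · rw [Set.Ioc_eq_empty (not_lt.2 h.le)]
    simp [integrableOn_empty]

include hconv in
lemma repr_pos (hf0 : f 0 = 0) {v : ℝ} (hv : 0 ≤ v) :
    f v = rd f 0 * v + ∫ u in Set.Ioc (0:ℝ) v, (rd f u - rd f 0) := by
  have h1 : ∫ u in (0:ℝ)..v, rd f u = f v := by rw [ftc_rd hconv hv, hf0, sub_zero]
  rw [intervalIntegral.integral_of_le hv] at h1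
  rw [← h1]
  rw [integral_sub (rd_integrableOn_Ioc hconv)
    (integrableOn_const (by rw [Real.volume_Ioc]; exact ENNReal.ofReal_ne_top))]
  rw [setIntegral_const, measureReal_def, Real.volume_Ioc, sub_zero, ENNReal.toReal_ofReal hv, smul_eq_mul]
  ring

include hconv in
lemma repr_neg (hf0 : f 0 = 0) {v : ℝ} (hv : v ≤ 0) :
    f v = rd f 0 * v + ∫ u in Set.Ioc (0:ℝ) (-v), (rd f 0 - rd f (-u)) := by
  have h1 : ∫ u in v..(0:ℝ), rd f u = - f v := by rw [ftc_rd hconv hv, hf0, zero_sub]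
  have h2 : ∫ u in (0:ℝ)..(-v), rd f (-u) = ∫ u in v..(0:ℝ), rd f u := by
    simpa using intervalIntegral.integral_comp_neg (a := (0:ℝ)) (b := -v) (fun u => rd f u)
  have h3 : ∫ u in Set.Ioc (0:ℝ) (-v), rd f (-u) = - f v := by
    rw [← intervalIntegral.integral_of_le (by linarith : (0:ℝ) ≤ -v), h2, h1]
  have hint : IntegrableOn (fun u => rd f (-u)) (Set.Ioc (0:ℝ) (-v)) := by
    have h4 : Antitone (fun u : ℝ => rd f (-u)) :=
      fun a b hab => rd_mono hconv (neg_le_neg hab)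
    rw [← Set.uIoc_of_le (by linarith : (0:ℝ) ≤ -v)]
    exact intervalIntegrable_iff.1 h4.intervalIntegrable
  rw [integral_sub (integrableOn_const (C := rd f 0) (s := Set.Ioc (0:ℝ) (-v)) (μ := volume)
    (by rw [Real.volume_Ioc]; exact ENNReal.ofReal_ne_top)) hint]
  rw [h3, setIntegral_const, measureReal_def, Real.volume_Ioc, sub_zero,
    ENNReal.toReal_ofReal (by linarith : (0:ℝ) ≤ -v), smul_eq_mul]
  ring

end Convex

section GLemmas
variable {g : ℝ → ℝ} (hg : Monotone g) (hg0 : 0 ≤ g 0)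

include hg in
lemma g_integrableOn_Ioc {a b : ℝ} : IntegrableOn g (Set.Ioc a b) := by
  rcases le_or_gt a b with h | h
  · rw [← Set.uIoc_of_le h]
    exact intervalIntegrable_iff.1 hg.intervalIntegrable
  · rw [Set.Ioc_eq_empty (not_lt.2 h.le)]
    simp [integrableOn_empty]

include hg hg0 in
lemma G_mono : Monotone (fun w => ∫ u in Set.Ioc (0:ℝ) w, g u) := by
  intro w w' hww'
  refine setIntegral_mono_set (g_integrableOn_Ioc hg) ?_ ?_
  · rw [Filter.EventuallyLE, ae_restrict_iff' measurableSet_Ioc]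
    refine Filter.Eventually.of_forall fun u hu => ?_
    exact le_trans hg0 (hg hu.1.le)
  · exact HasSubset.Subset.eventuallyLE (Set.Ioc_subset_Ioc_right hww')

include hg hg0 in
lemma G_nonneg {w : ℝ} : 0 ≤ ∫ u in Set.Ioc (0:ℝ) w, g u :=
  setIntegral_nonneg measurableSet_Ioc fun u hu => le_trans hg0 (hg hu.1.le)

include hg hg0 in
lemma tonelli_G {x : ℝ → ℝ} (hxm : Measurable x) (hx0 : ∀ t, 0 ≤ x t)
    (hGi : IntegrableOn (fun t => ∫ u in Set.Ioc (0:ℝ) (x t), g u) (Set.Ioi 0)) :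
    ENNReal.ofReal (∫ t in Set.Ioi (0:ℝ), ∫ u in Set.Ioc (0:ℝ) (x t), g u)
      = ∫⁻ u in Set.Ioi (0:ℝ), ENNReal.ofReal (g u) * dd x u := by
  rw [ofReal_integral_eq_lintegral_ofReal hGi
    (Filter.Eventually.of_forall fun t => G_nonneg hg hg0)]
  have hpt : ∀ t : ℝ, ENNReal.ofReal (∫ u in Set.Ioc (0:ℝ) (x t), g u)
      = ∫⁻ u in Set.Ioi (0:ℝ),
          (Set.Iio (x t)).indicator (fun u => ENNReal.ofReal (g u)) u := by
    intro t
    rw [integral_Ioc_eq_integral_Ioo,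
      ofReal_integral_eq_lintegral_ofReal
        ((g_integrableOn_Ioc hg (a := 0) (b := x t)).mono_set Set.Ioo_subset_Ioc_self)
        (by rw [Filter.EventuallyLE, ae_restrict_iff' measurableSet_Ioo]
            exact Filter.Eventually.of_forall fun u hu => le_trans hg0 (hg hu.1.le))]
    rw [lintegral_indicator measurableSet_Iio, Measure.restrict_restrict measurableSet_Iio]
    congr 1
    rw [Set.inter_comm, Set.Ioi_inter_Iio]
  calc ∫⁻ t in Set.Ioi (0:ℝ), ENNReal.ofReal (∫ u in Set.Ioc (0:ℝ) (x t), g u)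
      = ∫⁻ t in Set.Ioi (0:ℝ), ∫⁻ u in Set.Ioi (0:ℝ),
          (Set.Iio (x t)).indicator (fun u => ENNReal.ofReal (g u)) u := lintegral_congr hpt
    _ = ∫⁻ u in Set.Ioi (0:ℝ), ∫⁻ t in Set.Ioi (0:ℝ),
          (Set.Iio (x t)).indicator (fun u => ENNReal.ofReal (g u)) u := by
        apply lintegral_lintegral_swap
        have hS : MeasurableSet {p : ℝ × ℝ | p.2 < x p.1} :=
          measurableSet_lt measurable_snd (hxm.comp measurable_fst)
        have heq : (Function.uncurry fun t u => (Set.Iio (x t)).indicator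
            (fun u => ENNReal.ofReal (g u)) u)
            = ({p : ℝ × ℝ | p.2 < x p.1}).indicator (fun p => ENNReal.ofReal (g p.2)) := by
          ext p
          by_cases hp : p.2 < x p.1 <;>
            simp [Function.uncurry, Set.indicator_apply, Set.mem_Iio, Set.mem_setOf_eq, hp]
        rw [heq]
        exact ((ENNReal.measurable_ofReal.comp (hg.measurable.comp measurable_snd)).indicator
          hS).aemeasurable
    _ = ∫⁻ u in Set.Ioi (0:ℝ), ENNReal.ofReal (g u) * dd x u := by
        refine lintegral_congr fun u => ?_
        have h1 : ∀ t : ℝ, (Set.Iio (x t)).indicator (fun u => ENNReal.ofReal (g u)) u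
            = ({t : ℝ | u < x t}).indicator (fun _ => ENNReal.ofReal (g u)) t := by
          intro t
          by_cases hp : u < x t <;>
            simp [Set.indicator_apply, Set.mem_Iio, Set.mem_setOf_eq, hp]
        rw [lintegral_congr h1, lintegral_indicator (measurableSet_lt measurable_const hxm),
          setLIntegral_const]
        have h2 : (volume.restrict (Set.Ioi (0:ℝ))) {t | u < x t} = dd x u := by
          unfold dd
          rw [Measure.restrict_apply' measurableSet_Ioi,
            Measure.restrict_apply' measurableSet_Ioi]
          congr 1
          ext t
          simp only [Set.mem_inter_iff, Set.mem_setOf_eq, Set.mem_Ioi,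
            abs_of_nonneg (hx0 t)]
        rw [h2]

end GLemmas

end Stmt8Proof
namespace Stmt8Proof

lemma decomp {f : ℝ → ℝ} (hconv : ConvexOn ℝ Set.univ f) (hf0 : f 0 = 0)
    {x : ℝ → ℝ} (hxm : Measurable x) (hx : IntegrableOn x (Set.Ioi 0))
    (hfx : IntegrableOn (fun t => f (x t)) (Set.Ioi 0)) :
    IntegrableOn (fun t => ∫ u in Set.Ioc (0:ℝ) (posPart' x t), (rd f u - rd f 0))
        (Set.Ioi 0)
    ∧ IntegrableOn (fun t => ∫ u in Set.Ioc (0:ℝ) (negPart' x t), (rd f 0 - rd f (-u)))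
        (Set.Ioi 0)
    ∧ (∫ t in Set.Ioi (0:ℝ), f (x t)) = rd f 0 * (∫ t in Set.Ioi (0:ℝ), x t)
      + (∫ t in Set.Ioi (0:ℝ), ∫ u in Set.Ioc (0:ℝ) (posPart' x t), (rd f u - rd f 0))
      + (∫ t in Set.Ioi (0:ℝ), ∫ u in Set.Ioc (0:ℝ) (negPart' x t), (rd f 0 - rd f (-u))) := by
  have hgp : Monotone (fun u => rd f u - rd f 0) :=
    fun a b hab => sub_le_sub_right (rd_mono hconv hab) _
  have hgm : Monotone (fun u => rd f 0 - rd f (-u)) :=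
    fun a b hab => sub_le_sub_left (rd_mono hconv (neg_le_neg hab)) _
  have hgp0 : 0 ≤ rd f 0 - rd f 0 := by simp
  have hgm0 : 0 ≤ rd f 0 - rd f (-0) := by simp
  have hptw : ∀ t : ℝ, f (x t) = rd f 0 * x t
      + (∫ u in Set.Ioc (0:ℝ) (posPart' x t), (rd f u - rd f 0))
      + (∫ u in Set.Ioc (0:ℝ) (negPart' x t), (rd f 0 - rd f (-u))) := by
    intro t
    rcases le_total 0 (x t) with hv | hv
    · have h1 := repr_pos hconv hf0 hv
      have h2 : posPart' x t = x t := max_eq_left hv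
      have h3 : negPart' x t = 0 := max_eq_right (by simpa using hv)
      rw [h2, h3, Set.Ioc_self]
      simpa using h1
    · have h1 := repr_neg hconv hf0 hv
      have h2 : posPart' x t = 0 := max_eq_right hv
      have h3 : negPart' x t = - x t := max_eq_left (by simpa using hv)
      rw [h2, h3, Set.Ioc_self]
      simp only [setIntegral_empty, add_zero, zero_add]
      rw [add_comm (rd f 0 * x t)] at h1 ⊢
      simpa using h1
  have hSum : IntegrableOn (fun t =>
      (∫ u in Set.Ioc (0:ℝ) (posPart' x t), (rd f u - rd f 0))
      + (∫ u in Set.Ioc (0:ℝ) (negPart' x t), (rd f 0 - rd f (-u)))) (Set.Ioi 0) := by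
    have heq : (fun t =>
        (∫ u in Set.Ioc (0:ℝ) (posPart' x t), (rd f u - rd f 0))
        + (∫ u in Set.Ioc (0:ℝ) (negPart' x t), (rd f 0 - rd f (-u))))
        = fun t => f (x t) - rd f 0 * x t := funext fun t => by rw [hptw t]; ring
    rw [heq]
    exact hfx.sub (hx.const_mul _)
  have hxpm : Measurable (posPart' x) := hxm.max measurable_const
  have hxnm : Measurable (negPart' x) := hxm.neg.max measurable_const
  have hGpm : Measurable fun t => ∫ u in Set.Ioc (0:ℝ) (posPart' x t), (rd f u - rd f 0) :=
    (G_mono hgp hgp0).measurable.comp hxpm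
  have hGmm : Measurable fun t => ∫ u in Set.Ioc (0:ℝ) (negPart' x t), (rd f 0 - rd f (-u)) :=
    (G_mono hgm hgm0).measurable.comp hxnm
  have hGp_nn : ∀ t : ℝ, 0 ≤ ∫ u in Set.Ioc (0:ℝ) (posPart' x t), (rd f u - rd f 0) :=
    fun t => G_nonneg hgp hgp0
  have hGm_nn : ∀ t : ℝ, 0 ≤ ∫ u in Set.Ioc (0:ℝ) (negPart' x t), (rd f 0 - rd f (-u)) :=
    fun t => G_nonneg hgm hgm0
  have hGpi : IntegrableOn (fun t => ∫ u in Set.Ioc (0:ℝ) (posPart' x t), (rd f u - rd f 0))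
      (Set.Ioi 0) := by
    refine Integrable.mono hSum hGpm.aestronglyMeasurable
      (Filter.Eventually.of_forall fun t => ?_)
    rw [Real.norm_eq_abs, Real.norm_eq_abs, abs_of_nonneg (hGp_nn t),
      abs_of_nonneg (le_trans (hGp_nn t) (le_add_of_nonneg_right (hGm_nn t)))]
    exact le_add_of_nonneg_right (hGm_nn t)
  have hGmi : IntegrableOn (fun t => ∫ u in Set.Ioc (0:ℝ) (negPart' x t), (rd f 0 - rd f (-u)))
      (Set.Ioi 0) := by
    refine Integrable.mono hSum hGmm.aestronglyMeasurable
      (Filter.Eventually.of_forall fun t => ?_)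
    rw [Real.norm_eq_abs, Real.norm_eq_abs, abs_of_nonneg (hGm_nn t),
      abs_of_nonneg (le_trans (hGp_nn t) (le_add_of_nonneg_right (hGm_nn t)))]
    exact le_add_of_nonneg_left (hGp_nn t)
  refine ⟨hGpi, hGmi, ?_⟩
  have heq2 : (fun t => f (x t)) = fun t => rd f 0 * x t
      + ((∫ u in Set.Ioc (0:ℝ) (posPart' x t), (rd f u - rd f 0))
        + (∫ u in Set.Ioc (0:ℝ) (negPart' x t), (rd f 0 - rd f (-u)))) :=
    funext fun t => by rw [hptw t]; ring
  rw [heq2, integral_add (hx.const_mul _) hSum, integral_add hGpi hGmi,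
    integral_const_mul]
  ring

theorem stmt8_meas (x y : ℝ → ℝ) (hxm : Measurable x) (hym : Measurable y)
    (hx : IntegrableOn x (Set.Ioi 0))
    (hy : IntegrableOn y (Set.Ioi 0)) (hmaj : Maj x y)
    (f : ℝ → ℝ) (hconv : ConvexOn ℝ Set.univ f) (hf0 : f 0 = 0)
    (hfx : IntegrableOn (fun t => f (x t)) (Set.Ioi 0))
    (hfy : IntegrableOn (fun t => f (y t)) (Set.Ioi 0)) :
    (∫ t in Set.Ioi (0:ℝ), f (x t)) ≤ ∫ t in Set.Ioi (0:ℝ), f (y t) := by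
  obtain ⟨hsubp, hsubm, heq⟩ := hmaj
  obtain ⟨hGpx, hGmx, hX⟩ := decomp hconv hf0 hxm hx hfx
  obtain ⟨hGpy, hGmy, hY⟩ := decomp hconv hf0 hym hy hfy
  have hgp : Monotone (fun u => rd f u - rd f 0) :=
    fun a b hab => sub_le_sub_right (rd_mono hconv hab) _
  have hgm : Monotone (fun u => rd f 0 - rd f (-u)) :=
    fun a b hab => sub_le_sub_left (rd_mono hconv (neg_le_neg hab)) _
  have hgp0 : 0 ≤ rd f 0 - rd f 0 := by simp
  have hgm0 : 0 ≤ rd f 0 - rd f (-0) := by simp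
  have hxpm : Measurable (posPart' x) := hxm.max measurable_const
  have hxnm : Measurable (negPart' x) := hxm.neg.max measurable_const
  have hypm : Measurable (posPart' y) := hym.max measurable_const
  have hynm : Measurable (negPart' y) := hym.neg.max measurable_const
  have hxpi : IntegrableOn (posPart' x) (Set.Ioi 0) := hx.pos_part
  have hxni : IntegrableOn (negPart' x) (Set.Ioi 0) := hx.neg_part
  have hypi : IntegrableOn (posPart' y) (Set.Ioi 0) := hy.pos_part
  have hyni : IntegrableOn (negPart' y) (Set.Ioi 0) := hy.neg_part
  have hxp0 : ∀ t, 0 ≤ posPart' x t := fun t => le_max_right _ _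
  have hxn0 : ∀ t, 0 ≤ negPart' x t := fun t => le_max_right _ _
  have hyp0 : ∀ t, 0 ≤ posPart' y t := fun t => le_max_right _ _
  have hyn0 : ∀ t, 0 ≤ negPart' y t := fun t => le_max_right _ _
  have hkeyp := submaj_dd hxpm hxpi hxp0 hypm hypi hyp0 hsubp
  have hkeym := submaj_dd hxnm hxni hxn0 hynm hyni hyn0 hsubm
  have hIp : (∫ t in Set.Ioi (0:ℝ), ∫ u in Set.Ioc (0:ℝ) (posPart' x t), (rd f u - rd f 0))
      ≤ ∫ t in Set.Ioi (0:ℝ), ∫ u in Set.Ioc (0:ℝ) (posPart' y t), (rd f u - rd f 0) := by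
    have h1 := tonelli_G hgp hgp0 hxpm hxp0 hGpx
    have h2 := tonelli_G hgp hgp0 hypm hyp0 hGpy
    have h3 := pairing_mono hgp hkeyp
    rw [← h1, ← h2] at h3
    exact (ENNReal.ofReal_le_ofReal_iff
      (setIntegral_nonneg measurableSet_Ioi fun t _ => G_nonneg hgp hgp0)).1 h3
  have hIm : (∫ t in Set.Ioi (0:ℝ), ∫ u in Set.Ioc (0:ℝ) (negPart' x t), (rd f 0 - rd f (-u)))
      ≤ ∫ t in Set.Ioi (0:ℝ), ∫ u in Set.Ioc (0:ℝ) (negPart' y t), (rd f 0 - rd f (-u)) := by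
    have h1 := tonelli_G hgm hgm0 hxnm hxn0 hGmx
    have h2 := tonelli_G hgm hgm0 hynm hyn0 hGmy
    have h3 := pairing_mono hgm hkeym
    rw [← h1, ← h2] at h3
    exact (ENNReal.ofReal_le_ofReal_iff
      (setIntegral_nonneg measurableSet_Ioi fun t _ => G_nonneg hgm hgm0)).1 h3
  rw [hX, hY, heq]
  linarith

end Stmt8Proof

/-- If `x ≺ y` in `L¹(0,∞)`, then `∫ f∘x ≤ ∫ f∘y` for every convex `f : ℝ → ℝ` with
`f(0) = 0` such that `f∘x` and `f∘y` are integrable. -/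
theorem stmt8 (x y : ℝ → ℝ) (hx : IntegrableOn x (Set.Ioi 0))
    (hy : IntegrableOn y (Set.Ioi 0)) (hmaj : Maj x y)
    (f : ℝ → ℝ) (hconv : ConvexOn ℝ Set.univ f) (hf0 : f 0 = 0)
    (hfx : IntegrableOn (fun t => f (x t)) (Set.Ioi 0))
    (hfy : IntegrableOn (fun t => f (y t)) (Set.Ioi 0)) :
    (∫ t in Set.Ioi (0:ℝ), f (x t)) ≤ ∫ t in Set.Ioi (0:ℝ), f (y t) := by
  classical
  have hxae := hx.aestronglyMeasurable.aemeasurable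
  have hyae := hy.aestronglyMeasurable.aemeasurable
  set x' := hxae.mk x with hx'def
  set y' := hyae.mk y with hy'def
  have hx'm : Measurable x' := hxae.measurable_mk
  have hy'm : Measurable y' := hyae.measurable_mk
  have hxx' : x =ᵐ[volume.restrict (Set.Ioi (0:ℝ))] x' := hxae.ae_eq_mk
  have hyy' : y =ᵐ[volume.restrict (Set.Ioi (0:ℝ))] y' := hyae.ae_eq_mk
  have hre : ∀ a b : ℝ → ℝ, a =ᵐ[volume.restrict (Set.Ioi (0:ℝ))] b → rearr a = rearr b := by
    intro a b hab
    funext t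
    unfold rearr
    congr 1
    ext s
    have hmeaseq : (volume.restrict (Set.Ioi (0:ℝ))) {τ | s < |a τ|}
        = (volume.restrict (Set.Ioi (0:ℝ))) {τ | s < |b τ|} :=
      measure_congr (Filter.eventuallyEq_set.2 (hab.mono fun τ h => by
        simp only [Set.mem_setOf_eq, h]))
    rw [Set.mem_setOf_eq, Set.mem_setOf_eq, hmeaseq]
  have hpp : posPart' x =ᵐ[volume.restrict (Set.Ioi (0:ℝ))] posPart' x' :=
    hxx'.mono fun τ h => by unfold posPart'; rw [h]
  have hpn : negPart' x =ᵐ[volume.restrict (Set.Ioi (0:ℝ))] negPart' x' :=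
    hxx'.mono fun τ h => by unfold negPart'; rw [h]
  have hqp : posPart' y =ᵐ[volume.restrict (Set.Ioi (0:ℝ))] posPart' y' :=
    hyy'.mono fun τ h => by unfold posPart'; rw [h]
  have hqn : negPart' y =ᵐ[volume.restrict (Set.Ioi (0:ℝ))] negPart' y' :=
    hyy'.mono fun τ h => by unfold negPart'; rw [h]
  have hmaj' : Maj x' y' := by
    obtain ⟨h1, h2, h3⟩ := hmaj
    refine ⟨?_, ?_, ?_⟩
    · intro t ht
      have := h1 t ht
      rwa [hre _ _ hpp, hre _ _ hqp] at this
    · intro t ht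
      have := h2 t ht
      rwa [hre _ _ hpn, hre _ _ hqn] at this
    · rw [← integral_congr_ae hxx', ← integral_congr_ae hyy']
      exact h3
  have hx'i : IntegrableOn x' (Set.Ioi 0) := hx.congr hxx'
  have hy'i : IntegrableOn y' (Set.Ioi 0) := hy.congr hyy'
  have hfx' : IntegrableOn (fun t => f (x' t)) (Set.Ioi 0) :=
    hfx.congr (hxx'.mono fun t h => by simp only [h])
  have hfy' : IntegrableOn (fun t => f (y' t)) (Set.Ioi 0) :=
    hfy.congr (hyy'.mono fun t h => by simp only [h])
  calc (∫ t in Set.Ioi (0:ℝ), f (x t)) = ∫ t in Set.Ioi (0:ℝ), f (x' t) :=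
        integral_congr_ae (hxx'.mono fun t h => by simp only [h])
    _ ≤ ∫ t in Set.Ioi (0:ℝ), f (y' t) :=
        Stmt8Proof.stmt8_meas x' y' hx'm hy'm hx'i hy'i hmaj' f hconv hf0 hfx' hfy'
    _ = ∫ t in Set.Ioi (0:ℝ), f (y t) :=
        (integral_congr_ae (hyy'.mono fun t h => by simp only [h])).symm
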